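/- Let x > 0 be a real number and let k ∈ ℕ₀. Then (k+x−1)_k ≥ min{x/2, 1/6} · (2k)! / k!. -/
import Mathlib


/-- The Pochhammer symbol `(x)_n = x (x+1) ⋯ (x+n-1)` for real `x`. -/
noncomputable def pochR (x : ℝ) (n : ℕ) : ℝ := ∏ i ∈ Finset.range n, (x + i)

lemma fact_prod_aux (k : ℕ) : ∀ m : ℕ,
    ((k + m).factorial : ℝ) = k.factorial * ∏ i ∈ Finset.range m, ((k : ℝ) + 1 + i)
  | 0 => by simp
  | (m + 1) => by
    rw [show k + (m + 1) = (k + m) + 1 from rfl, Nat.factorial_succ, Finset.prod_range_succ]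
    push_cast
    rw [fact_prod_aux k m]
    ring

theorem pochR_lower_bound_central (x : ℝ) (hx : 0 < x) (k : ℕ) :
    min (x / 2) (1 / 6) * ((2 * k).factorial / k.factorial : ℝ) ≤
      pochR ((k : ℝ) + x - 1) k := by
  have hfac : ((2 * k).factorial / k.factorial : ℝ) = ∏ i ∈ Finset.range k, ((k : ℝ) + 1 + i) := by
    rw [two_mul, fact_prod_aux, mul_div_cancel_left₀]
    exact_mod_cast k.factorial_ne_zero
  rw [hfac, pochR]
  have hc1 : min (x / 2) (1 / 6) ≤ 1 / 6 := min_le_right _ _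
  have hc2 : min (x / 2) (1 / 6) ≤ x / 2 := min_le_left _ _
  have hc0 : (0:ℝ) ≤ min (x / 2) (1 / 6) := le_min (by positivity) (by norm_num)
  match k with
  | 0 => simpa using hc1.trans (by norm_num)
  | 1 =>
    simp only [Finset.prod_range_one, Nat.cast_one]
    nlinarith
  | (m + 2) =>
    push_cast
    rw [Finset.prod_range_succ, Finset.prod_range_succ, Finset.prod_range_succ',
      Finset.prod_range_succ']
    push_cast
    set c := min (x / 2) (1 / 6) with hc
    have hP : ∏ i ∈ Finset.range m, ((m : ℝ) + 2 + 1 + i) ≤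
        ∏ i ∈ Finset.range m, ((m : ℝ) + 2 + x - 1 + (↑i + 1 + 1)) := by
      apply Finset.prod_le_prod
      · intro i _; positivity
      · intro i _; linarith
    set A := ∏ i ∈ Finset.range m, ((m : ℝ) + 2 + 1 + i) with hA
    set B := ∏ i ∈ Finset.range m, ((m : ℝ) + 2 + x - 1 + (↑i + 1 + 1)) with hB
    have hAnn : (0:ℝ) ≤ A := by rw [hA]; positivity
    have hBnn : (0:ℝ) ≤ B := by
      rw [hB]
      apply Finset.prod_nonneg
      intro i _
      have : (0:ℝ) ≤ (i:ℝ) := Nat.cast_nonneg i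
      linarith
    have key : c * (((m : ℝ) + 2 + 1 + m) * ((m : ℝ) + 2 + 1 + (m + 1))) ≤
        ((m : ℝ) + 2 + x - 1 + 1) * ((m : ℝ) + 2 + x - 1 + 0) := by
      have hm : (0:ℝ) ≤ (m : ℝ) := Nat.cast_nonneg m
      nlinarith [sq_nonneg ((m:ℝ) + x), mul_nonneg hm hm]
    calc c * (A * ((m : ℝ) + 2 + 1 + m) * ((m : ℝ) + 2 + 1 + (m + 1)))
        = A * (c * (((m : ℝ) + 2 + 1 + m) * ((m : ℝ) + 2 + 1 + (m + 1)))) := by ring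
      _ ≤ B * (((m : ℝ) + 2 + x - 1 + 1) * ((m : ℝ) + 2 + x - 1 + 0)) :=
          mul_le_mul hP key (mul_nonneg hc0 (by positivity)) hBnn
      _ = B * ((m : ℝ) + 2 + x - 1 + 1) * ((m : ℝ) + 2 + x - 1 + 0) := by ring
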